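/- Let t ≥ 4 be even and let R be the distinguished symmetric cycle on {1,−1}^t defined by R^0 = (1,…,1), R^s = R^0 with coordinates 1,…,s negated (1 ≤ s ≤ t−1), R^{k+t} = −R^k. Let W(R) have rows S^k = (1/2)(R^k + R^{k+1}), 0 ≤ k ≤ t−1, and P(t) as above. Then the all-minus-ones vector T^{(−)} = (−1,…,−1) satisfies T^{(−)} = (−P(t)^1)·W(R), where P(t)^1 is the first row of P(t), i.e., P(t)^1 = (1,−1,1,−1,…,1,−1). -/
import Mathlib


/-- The alternating-sign Toeplitz matrix P(t). -/
def Pmat (t : ℕ) : Matrix (Fin t) (Fin t) ℝ :=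
  Matrix.of fun i j =>
    if (i : ℕ) ≤ (j : ℕ) then (-1 : ℝ) ^ ((i : ℕ) + (j : ℕ))
    else (-1 : ℝ) ^ ((i : ℕ) + (j : ℕ) + 1)

/-- The distinguished symmetric cycle R in the hypercube graph on {1,-1}^t:
    R^0 = (1,…,1); for 1 ≤ s ≤ t-1, R^s is R^0 with the first s coordinates
    negated; and R^{k+t} = -R^k for 0 ≤ k ≤ t-1. -/
def Rcyc (t : ℕ) : ℕ → Fin t → ℝ := fun s i =>
  if s < t then (if (i : ℕ) < s then -1 else 1)
  else (if (i : ℕ) < s - t then 1 else -1)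

/-- The subtope matrix W(R), whose rows are S^k = (1/2)(R^k + R^{k+1}). -/
noncomputable def Wmat (t : ℕ) : Matrix (Fin t) (Fin t) ℝ :=
  Matrix.of fun (k : Fin t) (j : Fin t) =>
    (Rcyc t (k : ℕ) j + Rcyc t ((k : ℕ) + 1) j) / 2

lemma Wmat_apply (t : ℕ) (k j : Fin t) :
    Wmat t k j = if (j:ℕ) < (k:ℕ) then -1 else if (k:ℕ) < (j:ℕ) then 1 else 0 := by
  have hk := k.isLt; have hj := j.isLt
  simp only [Wmat, Rcyc, Matrix.of_apply, if_pos hk]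
  split_ifs <;> norm_num <;> omega

lemma key (n : ℕ) : ∑ k ∈ Finset.range n, (-1:ℝ)^(k+1) = if Even n then 0 else -1 := by
  simp_rw [pow_succ]
  rw [← Finset.sum_mul, neg_one_geom_sum]
  split_ifs <;> ring

theorem stmt_12 (t : ℕ) (ht : 4 ≤ t) (hev : Even t) :
    -- T^{(−)} = (−P(t)^1) · W(R)
    (fun _ : Fin t => (-1 : ℝ)) =
      Matrix.vecMul (fun c => -(Pmat t ⟨0, by omega⟩ c)) (Wmat t) := by
  funext j
  have hj := j.isLt
  simp only [Matrix.vecMul, dotProduct]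
  have hP : ∀ c : Fin t, -(Pmat t ⟨0, by omega⟩ c) = (-1:ℝ)^((c:ℕ)+1) := by
    intro c
    show -(if (0:ℕ) ≤ (c:ℕ) then (-1:ℝ)^(0+(c:ℕ)) else (-1:ℝ)^(0+(c:ℕ)+1)) = _
    rw [if_pos (Nat.zero_le _), pow_succ, zero_add]; ring
  simp_rw [hP, Wmat_apply]
  rw [Fin.sum_univ_eq_sum_range
    (fun k => (-1:ℝ)^(k+1) * (if (j:ℕ) < k then -1 else if k < (j:ℕ) then 1 else 0))]
  rw [← Finset.sum_range_add_sum_Ico _ (Nat.succ_le_of_lt hj), Finset.sum_range_succ]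
  have hA : ∑ k ∈ Finset.range (j:ℕ),
      (-1:ℝ)^(k+1) * (if (j:ℕ) < k then -1 else if k < (j:ℕ) then 1 else 0)
      = ∑ k ∈ Finset.range (j:ℕ), (-1:ℝ)^(k+1) := by
    apply Finset.sum_congr rfl
    intro k hk
    rw [Finset.mem_range] at hk
    rw [if_neg (by omega), if_pos hk, mul_one]
  have hB : ∑ k ∈ Finset.Ico ((j:ℕ)+1) t,
      (-1:ℝ)^(k+1) * (if (j:ℕ) < k then -1 else if k < (j:ℕ) then 1 else 0)
      = -∑ k ∈ Finset.Ico ((j:ℕ)+1) t, (-1:ℝ)^(k+1) := by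
    rw [← Finset.sum_neg_distrib]
    apply Finset.sum_congr rfl
    intro k hk
    rw [Finset.mem_Ico] at hk
    rw [if_pos (by omega)]; ring
  rw [hA, hB, Finset.sum_Ico_eq_sub _ (Nat.succ_le_of_lt hj), key, key, key]
  simp only [lt_irrefl, if_false, mul_zero, add_zero, if_pos hev, Nat.succ_eq_add_one,
    Nat.even_add_one]
  by_cases h : Even (j:ℕ)
  · simp [h]
  · simp [h]
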